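/- Let φ : C → A be a bounded A-bimodule linear map admitting a quasi-basis. Then f(φ) admits a quasi-basis and there is an isomorphism ρ of A′ ∩ C onto B′ ∩ D such that θ^{f(φ)} = ρ ∘ θ^φ ∘ ρ^{-1}, where θ^φ and θ^{f(φ)} are the modular automorphisms of φ and f(φ). -/

import Mathlib

/-- A pair `(X, Y)` implementing a strong Morita equivalence of unital inclusions
`A ⊆ C` and `B ⊆ D` of unital C*-algebras: `Y` is a `C`–`D`-equivalence bimodule and
`X` is a closed subspace of `Y` which is an `A`–`B`-equivalence bimodule with the
restricted actions and inner products. -/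
structure MoritaPair
    (A : Type*) [NormedRing A] [StarRing A] [CStarRing A] [NormedAlgebra ℂ A]
      [CompleteSpace A] [StarModule ℂ A]
    (C : Type*) [NormedRing C] [StarRing C] [CStarRing C] [NormedAlgebra ℂ C]
      [CompleteSpace C] [StarModule ℂ C]
    (B : Type*) [NormedRing B] [StarRing B] [CStarRing B] [NormedAlgebra ℂ B]
      [CompleteSpace B] [StarModule ℂ B]
    (D : Type*) [NormedRing D] [StarRing D] [CStarRing D] [NormedAlgebra ℂ D]
      [CompleteSpace D] [StarModule ℂ D]
    (X : Type*) [NormedAddCommGroup X] [NormedSpace ℂ X]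
    (Y : Type*) [NormedAddCommGroup Y] [NormedSpace ℂ Y] [CompleteSpace Y] where
  /-- the unital isometric *-embedding of `A` into `C` -/
  ιA : A →⋆ₐ[ℂ] C
  /-- the unital isometric *-embedding of `B` into `D` -/
  ιB : B →⋆ₐ[ℂ] D
  ιA_isometry : Isometry ιA
  ιB_isometry : Isometry ιB
  /-- the inclusion of the closed subspace `X` into `Y` -/
  incl : X →ₗ[ℂ] Y
  incl_norm : ∀ x, ‖incl x‖ = ‖x‖
  incl_closed : IsClosed (Set.range incl)
  /-- left action of `C` on `Y` -/
  lC : C → Y → Y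
  lC_one : ∀ y, lC 1 y = y
  lC_mul : ∀ c c' y, lC (c * c') y = lC c (lC c' y)
  lC_add_right : ∀ c y y', lC c (y + y') = lC c y + lC c y'
  lC_add_left : ∀ c c' y, lC (c + c') y = lC c y + lC c' y
  lC_smul : ∀ (z : ℂ) c y, lC (z • c) y = z • lC c y
  /-- right action of `D` on `Y` -/
  rD : Y → D → Y
  rD_one : ∀ y, rD y 1 = y
  rD_mul : ∀ y d d', rD y (d * d') = rD (rD y d) d'
  rD_add_left : ∀ y y' d, rD (y + y') d = rD y d + rD y' d
  rD_add_right : ∀ y d d', rD y (d + d') = rD y d + rD y d'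
  rD_smul : ∀ (z : ℂ) y d, rD y (z • d) = z • rD y d
  smul_assoc : ∀ c y d, rD (lC c y) d = lC c (rD y d)
  /-- the left `C`-valued inner product on `Y` -/
  innC : Y → Y → C
  innC_add_left : ∀ y y' z, innC (y + y') z = innC y z + innC y' z
  innC_star : ∀ y z, star (innC y z) = innC z y
  innC_lC : ∀ c y z, innC (lC c y) z = c * innC y z
  innC_norm : ∀ y, ‖innC y y‖ = ‖y‖ ^ 2
  /-- the right `D`-valued inner product on `Y` -/
  innD : Y → Y → D
  innD_add_right : ∀ y z z', innD y (z + z') = innD y z + innD y z'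
  innD_star : ∀ y z, star (innD y z) = innD z y
  innD_rD : ∀ y z d, innD y (rD z d) = innD y z * d
  innD_norm : ∀ y, ‖innD y y‖ = ‖y‖ ^ 2
  imprimitivity : ∀ y z w, lC (innC y z) w = rD y (innD z w)
  innC_full : (Submodule.span ℂ {c : C | ∃ y z, innC y z = c}).topologicalClosure = ⊤
  innD_full : (Submodule.span ℂ {d : D | ∃ y z, innD y z = d}).topologicalClosure = ⊤
  /-- left action of `A` on `X`, the restriction of the `C`-action -/
  lA : A → X → X
  lA_compat : ∀ a x, incl (lA a x) = lC (ιA a) (incl x)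
  /-- right action of `B` on `X`, the restriction of the `D`-action -/
  rB : X → B → X
  rB_compat : ∀ x b, incl (rB x b) = rD (incl x) (ιB b)
  /-- the left `A`-valued inner product on `X`, the restriction of `innC` -/
  innA : X → X → A
  innA_compat : ∀ x z, ιA (innA x z) = innC (incl x) (incl z)
  /-- the right `B`-valued inner product on `X`, the restriction of `innD` -/
  innB : X → X → B
  innB_compat : ∀ x z, ιB (innB x z) = innD (incl x) (incl z)
  innA_full : (Submodule.span ℂ {a : A | ∃ x z, innA x z = a}).topologicalClosure = ⊤
  innB_full : (Submodule.span ℂ {b : B | ∃ x z, innB x z = b}).topologicalClosure = ⊤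

variable {A : Type*} [NormedRing A] [StarRing A] [CStarRing A] [NormedAlgebra ℂ A]
  [CompleteSpace A] [StarModule ℂ A]
variable {C : Type*} [NormedRing C] [StarRing C] [CStarRing C] [NormedAlgebra ℂ C]
  [CompleteSpace C] [StarModule ℂ C]
variable {B : Type*} [NormedRing B] [StarRing B] [CStarRing B] [NormedAlgebra ℂ B]
  [CompleteSpace B] [StarModule ℂ B]
variable {D : Type*} [NormedRing D] [StarRing D] [CStarRing D] [NormedAlgebra ℂ D]
  [CompleteSpace D] [StarModule ℂ D]
variable {X : Type*} [NormedAddCommGroup X] [NormedSpace ℂ X]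
variable {Y : Type*} [NormedAddCommGroup Y] [NormedSpace ℂ Y] [CompleteSpace Y]

namespace MoritaPair

variable (M : MoritaPair A C B D X Y)

lemma incl_inj : Function.Injective M.incl := by
  intro x y h
  have h2 : ‖x - y‖ = 0 := by rw [← M.incl_norm, map_sub, h, sub_self, norm_zero]
  simpa [sub_eq_zero] using norm_eq_zero.mp h2

lemma iA_inj : Function.Injective M.ιA := M.ιA_isometry.injective

lemma iB_inj : Function.Injective M.ιB := M.ιB_isometry.injective

lemma lC_sum {ι : Type*} (c : C) (s : Finset ι) (f : ι → Y) :
    M.lC c (∑ i ∈ s, f i) = ∑ i ∈ s, M.lC c (f i) :=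
  map_sum (AddMonoidHom.mk' (M.lC c) (M.lC_add_right c)) f s

lemma sum_lC {ι : Type*} (s : Finset ι) (f : ι → C) (y : Y) :
    M.lC (∑ i ∈ s, f i) y = ∑ i ∈ s, M.lC (f i) y :=
  map_sum (AddMonoidHom.mk' (fun c => M.lC c y) (fun a b => M.lC_add_left a b y)) f s

lemma rD_sum_right {ι : Type*} (y : Y) (s : Finset ι) (f : ι → D) :
    M.rD y (∑ i ∈ s, f i) = ∑ i ∈ s, M.rD y (f i) :=
  map_sum (AddMonoidHom.mk' (M.rD y) (M.rD_add_right y)) f s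

lemma sum_rD {ι : Type*} (s : Finset ι) (f : ι → Y) (d : D) :
    M.rD (∑ i ∈ s, f i) d = ∑ i ∈ s, M.rD (f i) d :=
  map_sum (AddMonoidHom.mk' (fun y => M.rD y d) (fun a b => M.rD_add_left a b d)) f s

lemma innD_sum_right {ι : Type*} (y : Y) (s : Finset ι) (f : ι → Y) :
    M.innD y (∑ i ∈ s, f i) = ∑ i ∈ s, M.innD y (f i) :=
  map_sum (AddMonoidHom.mk' (M.innD y) (M.innD_add_right y)) f s

lemma innD_add_left (y y' z : Y) : M.innD (y + y') z = M.innD y z + M.innD y' z := by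
  have h := congrArg star (M.innD_add_right z y y')
  rwa [star_add, M.innD_star, M.innD_star, M.innD_star] at h

lemma sum_innD {ι : Type*} (s : Finset ι) (f : ι → Y) (z : Y) :
    M.innD (∑ i ∈ s, f i) z = ∑ i ∈ s, M.innD (f i) z :=
  map_sum (AddMonoidHom.mk' (fun y => M.innD y z) (fun a b => M.innD_add_left a b z)) f s

lemma innC_add_right (y z z' : Y) : M.innC y (z + z') = M.innC y z + M.innC y z' := by
  have h := congrArg star (M.innC_add_left z z' y)
  rwa [star_add, M.innC_star, M.innC_star, M.innC_star] at h

lemma sum_innC {ι : Type*} (s : Finset ι) (f : ι → Y) (z : Y) :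
    M.innC (∑ i ∈ s, f i) z = ∑ i ∈ s, M.innC (f i) z :=
  map_sum (AddMonoidHom.mk' (fun y => M.innC y z) (fun a b => M.innC_add_left a b z)) f s

lemma innC_sum_right {ι : Type*} (y : Y) (s : Finset ι) (f : ι → Y) :
    M.innC y (∑ i ∈ s, f i) = ∑ i ∈ s, M.innC y (f i) :=
  map_sum (AddMonoidHom.mk' (M.innC y) (M.innC_add_right y)) f s

lemma mul_innD (d : D) (y z : Y) : d * M.innD y z = M.innD (M.rD y (star d)) z := by
  have h : star (M.innD z y * star d) = M.innD (M.rD y (star d)) z := by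
    rw [← M.innD_rD z y (star d), M.innD_star]
  rw [← h, star_mul, star_star, M.innD_star]

lemma innC_mul_right (y : Y) (c : C) (z : Y) :
    M.innC y (M.lC c z) = M.innC y z * star c := by
  rw [← M.innC_star (M.lC c z) y, M.innC_lC, star_mul, M.innC_star]

lemma imp' (y z w : Y) : M.rD y (M.innD z w) = M.lC (M.innC y z) w :=
  (M.imprimitivity y z w).symm

end MoritaPair
namespace MoritaPair

variable (M : MoritaPair A C B D X Y)

lemma innB_mul_right (x z : X) (b : B) :
    M.innB x (M.rB z b) = M.innB x z * b := by
  apply M.iB_inj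
  rw [map_mul, M.innB_compat, M.innB_compat, M.rB_compat, M.innD_rD]

lemma innA_mul_left (a : A) (x z : X) :
    M.innA (M.lA a x) z = a * M.innA x z := by
  apply M.iA_inj
  rw [map_mul, M.innA_compat, M.innA_compat, M.lA_compat, M.innC_lC]

lemma exists_B_family : ∃ (n : ℕ) (x z : Fin n → X), ∑ i, M.innB (x i) (z i) = 1 := by
  have h1 : (1 : B) ∈ closure
      ((Submodule.span ℂ {b : B | ∃ x z, M.innB x z = b} : Submodule ℂ B) : Set B) := by
    rw [← Submodule.topologicalClosure_coe, M.innB_full]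
    trivial
  obtain ⟨s0, hs0mem, hs0⟩ := Metric.mem_closure_iff.mp h1 1 one_pos
  obtain ⟨k, f, g, hg⟩ := Submodule.mem_span_set'.mp hs0mem
  choose xx zz hxz using fun i => (g i).2
  have hs0' : s0 = ∑ i, M.innB (xx i) (M.rB (zz i) (f i • 1)) := by
    rw [← hg]
    refine Finset.sum_congr rfl fun i _ => ?_
    rw [M.innB_mul_right, hxz i, mul_smul_comm, mul_one]
  have hnorm : ‖1 - s0‖ < 1 := by rwa [dist_eq_norm] at hs0
  set U := Units.oneSub (1 - s0) hnorm with hUdef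
  have hU : (U : B) = s0 := by rw [hUdef, Units.val_oneSub, sub_sub_cancel]
  refine ⟨k, xx, fun i => M.rB (M.rB (zz i) (f i • 1)) ↑U⁻¹, ?_⟩
  calc ∑ i, M.innB (xx i) (M.rB (M.rB (zz i) (f i • 1)) ↑U⁻¹)
      = ∑ i, M.innB (xx i) (M.rB (zz i) (f i • 1)) * ↑U⁻¹ := by
        refine Finset.sum_congr rfl fun i _ => M.innB_mul_right _ _ _
    _ = s0 * ↑U⁻¹ := by rw [hs0', Finset.sum_mul]
    _ = 1 := by rw [← hU]; exact U.mul_inv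

lemma exists_A_family : ∃ (n : ℕ) (p q : Fin n → X), ∑ l, M.innA (p l) (q l) = 1 := by
  have h1 : (1 : A) ∈ closure
      ((Submodule.span ℂ {a : A | ∃ x z, M.innA x z = a} : Submodule ℂ A) : Set A) := by
    rw [← Submodule.topologicalClosure_coe, M.innA_full]
    trivial
  obtain ⟨s0, hs0mem, hs0⟩ := Metric.mem_closure_iff.mp h1 1 one_pos
  obtain ⟨k, f, g, hg⟩ := Submodule.mem_span_set'.mp hs0mem
  choose pp qq hpq using fun i => (g i).2
  have hs0' : s0 = ∑ i, M.innA (M.lA (f i • 1) (pp i)) (qq i) := by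
    rw [← hg]
    refine Finset.sum_congr rfl fun i _ => ?_
    rw [M.innA_mul_left, hpq i, smul_mul_assoc, one_mul]
  have hnorm : ‖1 - s0‖ < 1 := by rwa [dist_eq_norm] at hs0
  set U := Units.oneSub (1 - s0) hnorm with hUdef
  have hU : (U : A) = s0 := by rw [hUdef, Units.val_oneSub, sub_sub_cancel]
  refine ⟨k, fun i => M.lA ↑U⁻¹ (M.lA (f i • 1) (pp i)), qq, ?_⟩
  calc ∑ i, M.innA (M.lA ↑U⁻¹ (M.lA (f i • 1) (pp i))) (qq i)
      = ∑ i, ↑U⁻¹ * M.innA (M.lA (f i • 1) (pp i)) (qq i) := by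
        refine Finset.sum_congr rfl fun i _ => M.innA_mul_left _ _ _
    _ = ↑U⁻¹ * s0 := by rw [hs0', Finset.mul_sum]
    _ = 1 := by rw [← hU]; exact U.inv_mul

end MoritaPair
namespace MoritaPair

variable (M : MoritaPair A C B D X Y)

section Families

variable {n nA : ℕ} {xB zB : Fin n → X} {pA qA : Fin nA → X}

lemma oneD (hB : ∑ i, M.innB (xB i) (zB i) = 1) :
    ∑ i, M.innD (M.incl (xB i)) (M.incl (zB i)) = 1 := by
  have h := congrArg M.ιB hB
  rw [map_sum, map_one] at h
  simpa only [M.innB_compat] using h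

lemma oneD' (hB : ∑ i, M.innB (xB i) (zB i) = 1) :
    ∑ i, M.innD (M.incl (zB i)) (M.incl (xB i)) = 1 := by
  have h := congrArg star (M.oneD hB)
  rw [star_sum, star_one] at h
  simpa only [M.innD_star] using h

lemma oneC (hA : ∑ l, M.innA (pA l) (qA l) = 1) :
    ∑ l, M.innC (M.incl (pA l)) (M.incl (qA l)) = 1 := by
  have h := congrArg M.ιA hA
  rw [map_sum, map_one] at h
  simpa only [M.innA_compat] using h

lemma recon1 (hB : ∑ i, M.innB (xB i) (zB i) = 1) (y : Y) :
    ∑ i, M.lC (M.innC y (M.incl (xB i))) (M.incl (zB i)) = y := by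
  calc ∑ i, M.lC (M.innC y (M.incl (xB i))) (M.incl (zB i))
      = ∑ i, M.rD y (M.innD (M.incl (xB i)) (M.incl (zB i))) := by
        exact Finset.sum_congr rfl fun i _ => M.imprimitivity _ _ _
    _ = M.rD y (∑ i, M.innD (M.incl (xB i)) (M.incl (zB i))) := (M.rD_sum_right _ _ _).symm
    _ = y := by rw [M.oneD hB, M.rD_one]

lemma recon1' (hB : ∑ i, M.innB (xB i) (zB i) = 1) (y : Y) :
    ∑ i, M.lC (M.innC y (M.incl (zB i))) (M.incl (xB i)) = y := by
  calc ∑ i, M.lC (M.innC y (M.incl (zB i))) (M.incl (xB i))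
      = ∑ i, M.rD y (M.innD (M.incl (zB i)) (M.incl (xB i))) := by
        exact Finset.sum_congr rfl fun i _ => M.imprimitivity _ _ _
    _ = M.rD y (∑ i, M.innD (M.incl (zB i)) (M.incl (xB i))) := (M.rD_sum_right _ _ _).symm
    _ = y := by rw [M.oneD' hB, M.rD_one]

lemma recon2 (hA : ∑ l, M.innA (pA l) (qA l) = 1) (y : Y) :
    ∑ l, M.rD (M.incl (pA l)) (M.innD (M.incl (qA l)) y) = y := by
  calc ∑ l, M.rD (M.incl (pA l)) (M.innD (M.incl (qA l)) y)
      = ∑ l, M.lC (M.innC (M.incl (pA l)) (M.incl (qA l))) y := by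
        exact Finset.sum_congr rfl fun l _ => M.imp' _ _ _
    _ = M.lC (∑ l, M.innC (M.incl (pA l)) (M.incl (qA l))) y := (M.sum_lC _ _ _).symm
    _ = y := by rw [M.oneC hA, M.lC_one]

lemma expandD (hB : ∑ i, M.innB (xB i) (zB i) = 1) (e : D) :
    e = ∑ i, M.innD (M.incl (xB i)) (M.rD (M.incl (zB i)) e) := by
  calc e = 1 * e := (one_mul e).symm
    _ = (∑ i, M.innD (M.incl (xB i)) (M.incl (zB i))) * e := by rw [M.oneD hB]
    _ = ∑ i, M.innD (M.incl (xB i)) (M.incl (zB i)) * e := Finset.sum_mul ..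
    _ = ∑ i, M.innD (M.incl (xB i)) (M.rD (M.incl (zB i)) e) := by
        exact Finset.sum_congr rfl fun i _ => (M.innD_rD _ _ _).symm

lemma nondegenD (hB : ∑ i, M.innB (xB i) (zB i) = 1) {e e' : D}
    (h : ∀ x0 : X, M.rD (M.incl x0) e = M.rD (M.incl x0) e') : e = e' := by
  rw [M.expandD hB e, M.expandD hB e']
  exact Finset.sum_congr rfl fun i _ => by rw [h]

lemma expandC (hA : ∑ l, M.innA (pA l) (qA l) = 1) (c : C) :
    c = ∑ l, M.innC (M.lC c (M.incl (pA l))) (M.incl (qA l)) := by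
  calc c = c * 1 := (mul_one c).symm
    _ = c * ∑ l, M.innC (M.incl (pA l)) (M.incl (qA l)) := by rw [M.oneC hA]
    _ = ∑ l, c * M.innC (M.incl (pA l)) (M.incl (qA l)) := Finset.mul_sum ..
    _ = ∑ l, M.innC (M.lC c (M.incl (pA l))) (M.incl (qA l)) := by
        exact Finset.sum_congr rfl fun l _ => (M.innC_lC _ _ _).symm

lemma nondegenC (hA : ∑ l, M.innA (pA l) (qA l) = 1) {c c' : C}
    (h : ∀ x0 : X, M.lC c (M.incl x0) = M.lC c' (M.incl x0)) : c = c' := by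
  rw [M.expandC hA c, M.expandC hA c']
  exact Finset.sum_congr rfl fun l _ => by rw [h]

lemma innD_lC_left (hB : ∑ i, M.innB (xB i) (zB i) = 1) (c : C) (y w : Y) :
    M.innD (M.lC c y) w = M.innD y (M.lC (star c) w) := by
  refine M.nondegenD hB fun x0 => ?_
  rw [M.imp', M.imp', M.innC_mul_right, M.lC_mul]

lemma injB (hB : ∑ i, M.innB (xB i) (zB i) = 1) {b b' : B}
    (h : ∀ x0 z0 : X, M.innA (M.rB x0 b) z0 = M.innA (M.rB x0 b') z0) : b = b' := by
  have hx : ∀ x0 : X, M.rB x0 b = M.rB x0 b' := by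
    intro x0
    set w := M.rB x0 b with hw
    set w' := M.rB x0 b' with hw'
    have hC : ∀ z0 : X, M.innC (M.incl w) (M.incl z0) = M.innC (M.incl w') (M.incl z0) := by
      intro z0
      rw [← M.innA_compat, ← M.innA_compat, h x0 z0]
    have hsub : ∀ z0 : X, M.innC (M.incl w - M.incl w') (M.incl z0) = 0 := by
      intro z0
      have h2 : M.innC ((M.incl w - M.incl w') + M.incl w') (M.incl z0)
          = M.innC (M.incl w - M.incl w') (M.incl z0) + M.innC (M.incl w') (M.incl z0) :=
        M.innC_add_left _ _ _
      rw [sub_add_cancel, hC z0, right_eq_add] at h2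
      exact h2
    have hz : M.incl w - M.incl w' = M.incl (w - w') := (map_sub M.incl w w').symm
    have h0 : M.innC (M.incl (w - w')) (M.incl (w - w')) = 0 := by
      have h3 := hsub (w - w')
      rwa [hz] at h3
    have h4 : ‖w - w'‖ = 0 := by
      have hn := M.innC_norm (M.incl (w - w'))
      rw [h0, norm_zero, M.incl_norm] at hn
      exact pow_eq_zero_iff two_ne_zero |>.mp hn.symm
    have := sub_eq_zero.mp (norm_eq_zero.mp h4)
    rwa [hw, hw'] at this
  apply M.iB_inj
  have hexp : ∀ bb : B, M.ιB bb = ∑ i, M.innD (M.incl (xB i)) (M.incl (M.rB (zB i) bb)) := by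
    intro bb
    calc M.ιB bb = 1 * M.ιB bb := (one_mul _).symm
      _ = (∑ i, M.innD (M.incl (xB i)) (M.incl (zB i))) * M.ιB bb := by rw [M.oneD hB]
      _ = ∑ i, M.innD (M.incl (xB i)) (M.incl (zB i)) * M.ιB bb := Finset.sum_mul ..
      _ = ∑ i, M.innD (M.incl (xB i)) (M.incl (M.rB (zB i) bb)) := by
          exact Finset.sum_congr rfl fun i _ => by rw [← M.innD_rD, ← M.rB_compat]
  rw [hexp b, hexp b']
  exact Finset.sum_congr rfl fun i _ => by rw [hx]

end Families

end MoritaPair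
namespace MoritaPair

variable (M : MoritaPair A C B D X Y)

section Families

variable {n nA : ℕ} {xB zB : Fin n → X} {pA qA : Fin nA → X}

lemma key (φ : C →L[ℂ] A) (ψ : D →L[ℂ] B)
    (hB : ∑ i, M.innB (xB i) (zB i) = 1)
    (hφ : ∀ (a : A) (c : C), φ (M.ιA a * c) = a * φ c ∧ φ (c * M.ιA a) = φ c * a)
    (hψ : ∀ (d : D) (x z : X),
      M.innA (M.rB x (ψ d)) z = φ (M.innC (M.rD (M.incl x) d) (M.incl z)))
    (w w' : X) (c : C) :
    ψ (M.innD (M.incl w) (M.lC c (M.incl w'))) = M.innB w (M.lA (φ c) w') := by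
  refine M.injB hB fun x0 z0 => ?_
  rw [hψ]
  apply M.iA_inj
  have hL : M.rD (M.incl x0) (M.innD (M.incl w) (M.lC c (M.incl w')))
      = M.lC (M.innC (M.incl x0) (M.incl w) * c) (M.incl w') := by
    rw [M.imp', M.lC_mul]
  rw [hL, M.innC_lC]
  have e1 : M.innC (M.incl x0) (M.incl w) = M.ιA (M.innA x0 w) := (M.innA_compat _ _).symm
  have e2 : M.innC (M.incl w') (M.incl z0) = M.ιA (M.innA w' z0) := (M.innA_compat _ _).symm
  rw [e1, e2, (hφ (M.innA w' z0) (M.ιA (M.innA x0 w) * c)).2, (hφ (M.innA x0 w) c).1]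
  rw [M.innA_compat, M.rB_compat, M.innB_compat, M.lA_compat, M.imp', ← M.lC_mul,
    M.innC_lC, e1, e2]
  simp only [map_mul]

lemma qb1 (φ : C →L[ℂ] A) (ψ : D →L[ℂ] B)
    (hB : ∑ i, M.innB (xB i) (zB i) = 1) (hA : ∑ l, M.innA (pA l) (qA l) = 1)
    {m : ℕ} {u v : Fin m → C}
    (hφ : ∀ (a : A) (c : C), φ (M.ιA a * c) = a * φ c ∧ φ (c * M.ιA a) = φ c * a)
    (hqb : ∀ c : C, c = ∑ j, u j * M.ιA (φ (v j * c)) ∧ c = ∑ j, M.ιA (φ (c * u j)) * v j)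
    (hψ : ∀ (d : D) (x z : X),
      M.innA (M.rB x (ψ d)) z = φ (M.innC (M.rD (M.incl x) d) (M.incl z)))
    (d : D) :
    ∑ i0 : Fin n, ∑ j : Fin m, ∑ l : Fin nA,
      M.innD (M.incl (xB i0)) (M.lC (u j) (M.incl (pA l))) *
        M.ιB (ψ (M.innD (M.incl (qA l)) (M.lC (v j) (M.incl (zB i0))) * d)) = d := by
  have hstep : ∀ (i0 : Fin n) (j : Fin m) (l : Fin nA),
      M.innD (M.incl (xB i0)) (M.lC (u j) (M.incl (pA l))) *
        M.ιB (ψ (M.innD (M.incl (qA l)) (M.lC (v j) (M.incl (zB i0))) * d))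
      = ∑ i' : Fin n, M.innD (M.incl (xB i0)) (M.lC (u j)
          (M.rD (M.incl (pA l)) (M.innD (M.incl (qA l))
            (M.lC (M.ιA (φ (v j * M.innC (M.rD (M.incl (zB i0)) d) (M.incl (xB i')))))
              (M.incl (zB i')))))) := by
    intro i0 j l
    have e1 : M.innD (M.incl (qA l)) (M.lC (v j) (M.incl (zB i0))) * d
        = ∑ i' : Fin n, M.innD (M.incl (qA l))
            (M.lC (v j * M.innC (M.rD (M.incl (zB i0)) d) (M.incl (xB i')))
              (M.incl (zB i'))) := by
      rw [← M.innD_rD, M.smul_assoc]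
      conv_lhs => rw [← M.recon1 hB (M.rD (M.incl (zB i0)) d)]
      rw [M.lC_sum, M.innD_sum_right]
      exact Finset.sum_congr rfl fun i' _ => by rw [M.lC_mul]
    rw [e1, map_sum, map_sum, Finset.mul_sum]
    refine Finset.sum_congr rfl fun i' _ => ?_
    rw [M.key φ ψ hB hφ hψ, M.innB_compat, M.lA_compat, ← M.innD_rD, M.smul_assoc]
  calc ∑ i0 : Fin n, ∑ j : Fin m, ∑ l : Fin nA,
        M.innD (M.incl (xB i0)) (M.lC (u j) (M.incl (pA l))) *
          M.ιB (ψ (M.innD (M.incl (qA l)) (M.lC (v j) (M.incl (zB i0))) * d))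
      = ∑ i0 : Fin n, ∑ j : Fin m, ∑ l : Fin nA, ∑ i' : Fin n,
          M.innD (M.incl (xB i0)) (M.lC (u j)
            (M.rD (M.incl (pA l)) (M.innD (M.incl (qA l))
              (M.lC (M.ιA (φ (v j * M.innC (M.rD (M.incl (zB i0)) d) (M.incl (xB i')))))
                (M.incl (zB i')))))) := by
        exact Finset.sum_congr rfl fun i0 _ => Finset.sum_congr rfl fun j _ =>
          Finset.sum_congr rfl fun l _ => hstep i0 j l
    _ = ∑ i0 : Fin n, ∑ j : Fin m, ∑ i' : Fin n, ∑ l : Fin nA,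
          M.innD (M.incl (xB i0)) (M.lC (u j)
            (M.rD (M.incl (pA l)) (M.innD (M.incl (qA l))
              (M.lC (M.ιA (φ (v j * M.innC (M.rD (M.incl (zB i0)) d) (M.incl (xB i')))))
                (M.incl (zB i')))))) := by
        exact Finset.sum_congr rfl fun i0 _ => Finset.sum_congr rfl fun j _ =>
          Finset.sum_comm
    _ = ∑ i0 : Fin n, ∑ j : Fin m, ∑ i' : Fin n,
          M.innD (M.incl (xB i0)) (M.lC (u j)
            (M.lC (M.ιA (φ (v j * M.innC (M.rD (M.incl (zB i0)) d) (M.incl (xB i')))))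
              (M.incl (zB i')))) := by
        refine Finset.sum_congr rfl fun i0 _ => Finset.sum_congr rfl fun j _ =>
          Finset.sum_congr rfl fun i' _ => ?_
        have hy := M.recon2 hA (M.lC (M.ιA (φ (v j * M.innC (M.rD (M.incl (zB i0)) d)
          (M.incl (xB i'))))) (M.incl (zB i')))
        calc ∑ l : Fin nA, M.innD (M.incl (xB i0)) (M.lC (u j)
              (M.rD (M.incl (pA l)) (M.innD (M.incl (qA l))
                (M.lC (M.ιA (φ (v j * M.innC (M.rD (M.incl (zB i0)) d) (M.incl (xB i')))))
                  (M.incl (zB i'))))))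
            = M.innD (M.incl (xB i0)) (M.lC (u j)
                (∑ l : Fin nA, M.rD (M.incl (pA l)) (M.innD (M.incl (qA l))
                  (M.lC (M.ιA (φ (v j * M.innC (M.rD (M.incl (zB i0)) d) (M.incl (xB i')))))
                    (M.incl (zB i')))))) := by
              rw [M.lC_sum, M.innD_sum_right]
          _ = _ := by rw [hy]
    _ = ∑ i0 : Fin n, ∑ i' : Fin n,
          M.innD (M.incl (xB i0))
            (M.lC (M.innC (M.rD (M.incl (zB i0)) d) (M.incl (xB i'))) (M.incl (zB i'))) := by
        refine Finset.sum_congr rfl fun i0 _ => ?_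
        rw [Finset.sum_comm]
        refine Finset.sum_congr rfl fun i' _ => ?_
        calc ∑ j : Fin m, M.innD (M.incl (xB i0)) (M.lC (u j)
              (M.lC (M.ιA (φ (v j * M.innC (M.rD (M.incl (zB i0)) d) (M.incl (xB i')))))
                (M.incl (zB i'))))
            = ∑ j : Fin m, M.innD (M.incl (xB i0))
                (M.lC (u j * M.ιA (φ (v j * M.innC (M.rD (M.incl (zB i0)) d) (M.incl (xB i')))))
                  (M.incl (zB i'))) := by
              exact Finset.sum_congr rfl fun j _ => by rw [M.lC_mul]
          _ = M.innD (M.incl (xB i0))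
                (M.lC (∑ j : Fin m, u j * M.ιA (φ (v j * M.innC (M.rD (M.incl (zB i0)) d)
                    (M.incl (xB i'))))) (M.incl (zB i'))) := by
              rw [M.sum_lC, M.innD_sum_right]
          _ = _ := by rw [← (hqb (M.innC (M.rD (M.incl (zB i0)) d) (M.incl (xB i')))).1]
    _ = ∑ i0 : Fin n, M.innD (M.incl (xB i0)) (M.rD (M.incl (zB i0)) d) := by
        refine Finset.sum_congr rfl fun i0 _ => ?_
        rw [← M.innD_sum_right, M.recon1 hB]
    _ = ∑ i0 : Fin n, M.innD (M.incl (xB i0)) (M.incl (zB i0)) * d := by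
        exact Finset.sum_congr rfl fun i0 _ => M.innD_rD _ _ _
    _ = d := by rw [← Finset.sum_mul, M.oneD hB, one_mul]

end Families

end MoritaPair
namespace MoritaPair

variable (M : MoritaPair A C B D X Y)

section Families

variable {n nA : ℕ} {xB zB : Fin n → X} {pA qA : Fin nA → X}

lemma qb2 (φ : C →L[ℂ] A) (ψ : D →L[ℂ] B)
    (hB : ∑ i, M.innB (xB i) (zB i) = 1) (hA : ∑ l, M.innA (pA l) (qA l) = 1)
    {m : ℕ} {u v : Fin m → C}
    (hφ : ∀ (a : A) (c : C), φ (M.ιA a * c) = a * φ c ∧ φ (c * M.ιA a) = φ c * a)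
    (hqb : ∀ c : C, c = ∑ j, u j * M.ιA (φ (v j * c)) ∧ c = ∑ j, M.ιA (φ (c * u j)) * v j)
    (hψ : ∀ (d : D) (x z : X),
      M.innA (M.rB x (ψ d)) z = φ (M.innC (M.rD (M.incl x) d) (M.incl z)))
    (d : D) :
    ∑ i0 : Fin n, ∑ j : Fin m, ∑ l : Fin nA,
      M.ιB (ψ (d * M.innD (M.incl (xB i0)) (M.lC (u j) (M.incl (pA l))))) *
        M.innD (M.incl (qA l)) (M.lC (v j) (M.incl (zB i0))) = d := by
  have hstep : ∀ (i0 : Fin n) (j : Fin m) (l : Fin nA),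
      M.ιB (ψ (d * M.innD (M.incl (xB i0)) (M.lC (u j) (M.incl (pA l))))) *
        M.innD (M.incl (qA l)) (M.lC (v j) (M.incl (zB i0)))
      = ∑ i' : Fin n, M.innD (M.incl (zB i'))
          (M.lC ((M.ιA (φ (star (M.innC (M.rD (M.incl (xB i0)) (star d)) (M.incl (xB i'))) * u j))
              * M.innC (M.incl (pA l)) (M.incl (qA l))) * v j) (M.incl (zB i0))) := by
    intro i0 j l
    have e1 : d * M.innD (M.incl (xB i0)) (M.lC (u j) (M.incl (pA l)))
        = ∑ i' : Fin n, M.innD (M.incl (zB i'))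
            (M.lC (star (M.innC (M.rD (M.incl (xB i0)) (star d)) (M.incl (xB i'))) * u j)
              (M.incl (pA l))) := by
      rw [M.mul_innD]
      conv_lhs => rw [← M.recon1 hB (M.rD (M.incl (xB i0)) (star d))]
      rw [M.sum_innD]
      refine Finset.sum_congr rfl fun i' _ => ?_
      rw [M.innD_lC_left hB, ← M.lC_mul]
    rw [e1, map_sum, map_sum, Finset.sum_mul]
    refine Finset.sum_congr rfl fun i' _ => ?_
    rw [M.key φ ψ hB hφ hψ, M.innB_compat, M.lA_compat, ← M.innD_rD, M.imp', M.innC_lC,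
      ← M.lC_mul]
  calc ∑ i0 : Fin n, ∑ j : Fin m, ∑ l : Fin nA,
        M.ιB (ψ (d * M.innD (M.incl (xB i0)) (M.lC (u j) (M.incl (pA l))))) *
          M.innD (M.incl (qA l)) (M.lC (v j) (M.incl (zB i0)))
      = ∑ i0 : Fin n, ∑ j : Fin m, ∑ l : Fin nA, ∑ i' : Fin n,
          M.innD (M.incl (zB i'))
            (M.lC ((M.ιA (φ (star (M.innC (M.rD (M.incl (xB i0)) (star d)) (M.incl (xB i'))) * u j))
                * M.innC (M.incl (pA l)) (M.incl (qA l))) * v j) (M.incl (zB i0))) := by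
        exact Finset.sum_congr rfl fun i0 _ => Finset.sum_congr rfl fun j _ =>
          Finset.sum_congr rfl fun l _ => hstep i0 j l
    _ = ∑ i0 : Fin n, ∑ j : Fin m, ∑ i' : Fin n, ∑ l : Fin nA,
          M.innD (M.incl (zB i'))
            (M.lC ((M.ιA (φ (star (M.innC (M.rD (M.incl (xB i0)) (star d)) (M.incl (xB i'))) * u j))
                * M.innC (M.incl (pA l)) (M.incl (qA l))) * v j) (M.incl (zB i0))) := by
        exact Finset.sum_congr rfl fun i0 _ => Finset.sum_congr rfl fun j _ => Finset.sum_comm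
    _ = ∑ i0 : Fin n, ∑ j : Fin m, ∑ i' : Fin n,
          M.innD (M.incl (zB i'))
            (M.lC (M.ιA (φ (star (M.innC (M.rD (M.incl (xB i0)) (star d)) (M.incl (xB i'))) * u j))
              * v j) (M.incl (zB i0))) := by
        refine Finset.sum_congr rfl fun i0 _ => Finset.sum_congr rfl fun j _ =>
          Finset.sum_congr rfl fun i' _ => ?_
        calc ∑ l : Fin nA, M.innD (M.incl (zB i'))
              (M.lC ((M.ιA (φ (star (M.innC (M.rD (M.incl (xB i0)) (star d)) (M.incl (xB i'))) * u j))
                  * M.innC (M.incl (pA l)) (M.incl (qA l))) * v j) (M.incl (zB i0)))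
            = M.innD (M.incl (zB i'))
                (M.lC (∑ l : Fin nA,
                  (M.ιA (φ (star (M.innC (M.rD (M.incl (xB i0)) (star d)) (M.incl (xB i'))) * u j))
                    * M.innC (M.incl (pA l)) (M.incl (qA l))) * v j) (M.incl (zB i0))) := by
              rw [M.sum_lC, M.innD_sum_right]
          _ = _ := by rw [← Finset.sum_mul, ← Finset.mul_sum, M.oneC hA, mul_one]
    _ = ∑ i0 : Fin n, ∑ i' : Fin n,
          M.innD (M.incl (zB i'))
            (M.lC (star (M.innC (M.rD (M.incl (xB i0)) (star d)) (M.incl (xB i'))))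
              (M.incl (zB i0))) := by
        refine Finset.sum_congr rfl fun i0 _ => ?_
        rw [Finset.sum_comm]
        refine Finset.sum_congr rfl fun i' _ => ?_
        calc ∑ j : Fin m, M.innD (M.incl (zB i'))
              (M.lC (M.ιA (φ (star (M.innC (M.rD (M.incl (xB i0)) (star d)) (M.incl (xB i'))) * u j))
                * v j) (M.incl (zB i0)))
            = M.innD (M.incl (zB i'))
                (M.lC (∑ j : Fin m,
                  M.ιA (φ (star (M.innC (M.rD (M.incl (xB i0)) (star d)) (M.incl (xB i'))) * u j))
                    * v j) (M.incl (zB i0))) := by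
              rw [M.sum_lC, M.innD_sum_right]
          _ = _ := by
              rw [← (hqb (star (M.innC (M.rD (M.incl (xB i0)) (star d)) (M.incl (xB i'))))).2]
    _ = ∑ i0 : Fin n, M.innD (M.rD (M.incl (xB i0)) (star d)) (M.incl (zB i0)) := by
        refine Finset.sum_congr rfl fun i0 _ => ?_
        calc ∑ i' : Fin n, M.innD (M.incl (zB i'))
              (M.lC (star (M.innC (M.rD (M.incl (xB i0)) (star d)) (M.incl (xB i'))))
                (M.incl (zB i0)))
            = ∑ i' : Fin n, M.innD
                (M.lC (M.innC (M.rD (M.incl (xB i0)) (star d)) (M.incl (xB i'))) (M.incl (zB i')))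
                (M.incl (zB i0)) := by
              exact Finset.sum_congr rfl fun i' _ => (M.innD_lC_left hB _ _ _).symm
          _ = _ := by rw [← M.sum_innD, M.recon1 hB]
    _ = ∑ i0 : Fin n, d * M.innD (M.incl (xB i0)) (M.incl (zB i0)) := by
        exact Finset.sum_congr rfl fun i0 _ => (M.mul_innD _ _ _).symm
    _ = d := by rw [← Finset.mul_sum, M.oneD hB, mul_one]

end Families

end MoritaPair
namespace MoritaPair

variable (M : MoritaPair A C B D X Y)

/-- the candidate isomorphism of relative commutants -/
def rho {n : ℕ} (xB zB : Fin n → X) (c : C) : D :=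
  ∑ i, M.innD (M.incl (xB i)) (M.lC c (M.incl (zB i)))

/-- the candidate inverse of `rho` -/
def sig {nA : ℕ} (pA qA : Fin nA → X) (d : D) : C :=
  ∑ l, M.innC (M.rD (M.incl (pA l)) d) (M.incl (qA l))

section Families

variable {n nA : ℕ} {xB zB : Fin n → X} {pA qA : Fin nA → X}

lemma rho_P1 (hB : ∑ i, M.innB (xB i) (zB i) = 1) {c : C}
    (hc : ∀ a : A, M.ιA a * c = c * M.ιA a) (x0 : X) :
    M.rD (M.incl x0) (M.rho xB zB c) = M.lC c (M.incl x0) := by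
  simp only [rho]
  rw [M.rD_sum_right]
  calc ∑ i, M.rD (M.incl x0) (M.innD (M.incl (xB i)) (M.lC c (M.incl (zB i))))
      = ∑ i, M.lC c (M.lC (M.innC (M.incl x0) (M.incl (xB i))) (M.incl (zB i))) := by
        refine Finset.sum_congr rfl fun i _ => ?_
        rw [M.imp', ← M.lC_mul, ← M.lC_mul]
        congr 1
        rw [← M.innA_compat]
        exact hc _
    _ = M.lC c (M.incl x0) := by rw [← M.lC_sum, M.recon1 hB]

lemma rho_comm (hB : ∑ i, M.innB (xB i) (zB i) = 1) {c : C}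
    (hc : ∀ a : A, M.ιA a * c = c * M.ιA a) (b : B) :
    M.ιB b * M.rho xB zB c = M.rho xB zB c * M.ιB b := by
  refine M.nondegenD hB fun x0 => ?_
  calc M.rD (M.incl x0) (M.ιB b * M.rho xB zB c)
      = M.rD (M.incl (M.rB x0 b)) (M.rho xB zB c) := by rw [M.rD_mul, M.rB_compat]
    _ = M.lC c (M.incl (M.rB x0 b)) := M.rho_P1 hB hc _
    _ = M.lC c (M.rD (M.incl x0) (M.ιB b)) := by rw [M.rB_compat]
    _ = M.rD (M.lC c (M.incl x0)) (M.ιB b) := (M.smul_assoc _ _ _).symm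
    _ = M.rD (M.rD (M.incl x0) (M.rho xB zB c)) (M.ιB b) := by rw [M.rho_P1 hB hc]
    _ = M.rD (M.incl x0) (M.rho xB zB c * M.ιB b) := (M.rD_mul _ _ _).symm

lemma rho_mul (hB : ∑ i, M.innB (xB i) (zB i) = 1) {c c' : C}
    (hc : ∀ a : A, M.ιA a * c = c * M.ιA a) (hc' : ∀ a : A, M.ιA a * c' = c' * M.ιA a) :
    M.rho xB zB (c * c') = M.rho xB zB c * M.rho xB zB c' := by
  have hcc' : ∀ a : A, M.ιA a * (c * c') = (c * c') * M.ιA a := fun a => by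
    rw [← mul_assoc, hc, mul_assoc, hc', mul_assoc]
  refine M.nondegenD hB fun x0 => ?_
  rw [M.rho_P1 hB hcc', M.rD_mul, M.rho_P1 hB hc, M.smul_assoc, M.rho_P1 hB hc', ← M.lC_mul]

lemma rho_add (c c' : C) :
    M.rho xB zB (c + c') = M.rho xB zB c + M.rho xB zB c' := by
  simp only [rho]
  rw [← Finset.sum_add_distrib]
  exact Finset.sum_congr rfl fun i _ => by rw [M.lC_add_left, M.innD_add_right]

lemma rho_star (hB : ∑ i, M.innB (xB i) (zB i) = 1) {c : C}
    (hc : ∀ a : A, M.ιA a * c = c * M.ιA a) :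
    M.rho xB zB (star c) = star (M.rho xB zB c) := by
  have hsc : ∀ a : A, M.ιA a * star c = star c * M.ιA a := fun a => by
    have h := congrArg star (hc (star a))
    rw [star_mul, star_mul, ← map_star, star_star] at h
    exact h.symm
  have hstar : star (M.rho xB zB c) = ∑ i, M.innD (M.lC c (M.incl (zB i))) (M.incl (xB i)) := by
    simp only [rho]
    rw [star_sum]
    exact Finset.sum_congr rfl fun i _ => M.innD_star _ _
  refine M.nondegenD hB fun x0 => ?_
  rw [M.rho_P1 hB hsc, hstar, M.rD_sum_right]
  symm
  calc ∑ i, M.rD (M.incl x0) (M.innD (M.lC c (M.incl (zB i))) (M.incl (xB i)))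
      = ∑ i, M.lC (star c) (M.lC (M.innC (M.incl x0) (M.incl (zB i))) (M.incl (xB i))) := by
        refine Finset.sum_congr rfl fun i _ => ?_
        rw [M.imp', M.innC_mul_right, ← M.lC_mul]
        congr 1
        rw [← M.innA_compat]
        exact hsc _
    _ = M.lC (star c) (M.incl x0) := by rw [← M.lC_sum, M.recon1' hB]

lemma rho_inj (hB : ∑ i, M.innB (xB i) (zB i) = 1) (hA : ∑ l, M.innA (pA l) (qA l) = 1)
    {c c' : C} (hc : ∀ a : A, M.ιA a * c = c * M.ιA a)
    (hc' : ∀ a : A, M.ιA a * c' = c' * M.ιA a)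
    (h : M.rho xB zB c = M.rho xB zB c') : c = c' :=
  M.nondegenC hA fun x0 => by rw [← M.rho_P1 hB hc, h, M.rho_P1 hB hc']

lemma sig_P1 (hA : ∑ l, M.innA (pA l) (qA l) = 1) {d : D}
    (hd : ∀ b : B, M.ιB b * d = d * M.ιB b) (x0 : X) :
    M.lC (M.sig pA qA d) (M.incl x0) = M.rD (M.incl x0) d := by
  simp only [sig]
  rw [M.sum_lC]
  calc ∑ l, M.lC (M.innC (M.rD (M.incl (pA l)) d) (M.incl (qA l))) (M.incl x0)
      = ∑ l, M.rD (M.incl (pA l)) (M.innD (M.incl (qA l)) (M.incl x0) * d) := by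
        refine Finset.sum_congr rfl fun l _ => ?_
        rw [← M.imp', ← M.rD_mul]
        congr 1
        rw [← M.innB_compat]
        exact (hd _).symm
    _ = ∑ l, M.rD (M.rD (M.incl (pA l)) (M.innD (M.incl (qA l)) (M.incl x0))) d := by
        exact Finset.sum_congr rfl fun l _ => M.rD_mul _ _ _
    _ = M.rD (M.incl x0) d := by rw [← M.sum_rD, M.recon2 hA]

lemma sig_comm (hA : ∑ l, M.innA (pA l) (qA l) = 1) {d : D}
    (hd : ∀ b : B, M.ιB b * d = d * M.ιB b) :
    ∀ a : A, M.ιA a * M.sig pA qA d = M.sig pA qA d * M.ιA a := by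
  intro a
  refine M.nondegenC hA fun x0 => ?_
  calc M.lC (M.ιA a * M.sig pA qA d) (M.incl x0)
      = M.lC (M.ιA a) (M.rD (M.incl x0) d) := by rw [M.lC_mul, M.sig_P1 hA hd]
    _ = M.rD (M.incl (M.lA a x0)) d := by rw [← M.smul_assoc, ← M.lA_compat]
    _ = M.lC (M.sig pA qA d) (M.incl (M.lA a x0)) := (M.sig_P1 hA hd _).symm
    _ = M.lC (M.sig pA qA d * M.ιA a) (M.incl x0) := by rw [M.lA_compat, ← M.lC_mul]

lemma rho_sig (hB : ∑ i, M.innB (xB i) (zB i) = 1) (hA : ∑ l, M.innA (pA l) (qA l) = 1)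
    {d : D} (hd : ∀ b : B, M.ιB b * d = d * M.ιB b) :
    M.rho xB zB (M.sig pA qA d) = d :=
  M.nondegenD hB fun x0 => by
    rw [M.rho_P1 hB (M.sig_comm hA hd), M.sig_P1 hA hd]

lemma P1gen (hB : ∑ i, M.innB (xB i) (zB i) = 1) {c2 : C}
    (hc2 : ∀ a : A, M.ιA a * c2 = c2 * M.ιA a) (y' : Y) (z0 : X) :
    M.innC (M.rD y' (M.rho xB zB c2)) (M.incl z0) = M.innC y' (M.incl z0) * c2 := by
  simp only [rho]
  rw [M.rD_sum_right, M.sum_innC]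
  calc ∑ i, M.innC (M.rD y' (M.innD (M.incl (xB i)) (M.lC c2 (M.incl (zB i))))) (M.incl z0)
      = ∑ i, M.innC (M.lC (M.innC y' (M.incl (xB i))) (M.incl (zB i))) (M.incl z0) * c2 := by
        refine Finset.sum_congr rfl fun i _ => ?_
        rw [M.imp', ← M.lC_mul, M.innC_lC, M.innC_lC, mul_assoc, mul_assoc]
        congr 1
        rw [← M.innA_compat]
        exact (hc2 _).symm
    _ = (∑ i, M.innC (M.lC (M.innC y' (M.incl (xB i))) (M.incl (zB i))) (M.incl z0)) * c2 :=
        (Finset.sum_mul ..).symm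
    _ = M.innC y' (M.incl z0) * c2 := by rw [← M.sum_innC, M.recon1 hB]

end Families

end MoritaPair
namespace MoritaPair

variable (M : MoritaPair A C B D X Y)

section Families

variable {n nA : ℕ} {xB zB : Fin n → X} {pA qA : Fin nA → X}

lemma conj_key (φ : C →L[ℂ] A) (ψ : D →L[ℂ] B)
    (hB : ∑ i, M.innB (xB i) (zB i) = 1)
    (hψ : ∀ (d : D) (x z : X),
      M.innA (M.rB x (ψ d)) z = φ (M.innC (M.rD (M.incl x) d) (M.incl z)))
    {c : C} (hc : ∀ a : A, M.ιA a * c = c * M.ιA a)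
    {c2 : C} (hc2 : ∀ a : A, M.ιA a * c2 = c2 * M.ιA a)
    (hmod : ∀ y : C, φ (c * y) = φ (y * c2)) :
    ∀ y : D, ψ (M.rho xB zB c * y) = ψ (y * M.rho xB zB c2) := by
  intro y
  refine M.injB hB fun x0 z0 => ?_
  rw [hψ, hψ]
  have hL : M.rD (M.incl x0) (M.rho xB zB c * y) = M.lC c (M.rD (M.incl x0) y) := by
    rw [M.rD_mul, M.rho_P1 hB hc, M.smul_assoc]
  have hR : M.rD (M.incl x0) (y * M.rho xB zB c2)
      = M.rD (M.rD (M.incl x0) y) (M.rho xB zB c2) := M.rD_mul _ _ _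
  rw [hL, hR, M.innC_lC, hmod, M.P1gen hB hc2]

end Families

end MoritaPair
/-- if `φ : C → A` is a bounded `A`-bimodule map with a quasi-basis, then
`f(φ)` has a quasi-basis and there is an isomorphism `ρ : A′ ∩ C → B′ ∩ D` conjugating the
modular automorphism `θ^φ` into the modular automorphism `θ^{f(φ)}`, the modular
automorphisms being characterized by the modular conditions. -/
theorem stmt18 (M : MoritaPair A C B D X Y) (φ : C →L[ℂ] A)
    (hφ : ∀ (a : A) (c : C), φ (M.ιA a * c) = a * φ c ∧ φ (c * M.ιA a) = φ c * a)
    (m : ℕ) (u v : Fin m → C)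
    (hqb : ∀ c : C, c = ∑ i, u i * M.ιA (φ (v i * c)) ∧
      c = ∑ i, M.ιA (φ (c * u i)) * v i)
    (ψ : D →L[ℂ] B)
    (hψ : ∀ (d : D) (x z : X),
      M.innA (M.rB x (ψ d)) z = φ (M.innC (M.rD (M.incl x) d) (M.incl z))) :
    -- `f(φ) = ψ` has a quasi-basis
    (∃ (m' : ℕ) (u' v' : Fin m' → D), ∀ d : D,
      d = ∑ i, u' i * M.ιB (ψ (v' i * d)) ∧ d = ∑ i, M.ιB (ψ (d * u' i)) * v' i) ∧
    -- and there is an isomorphism `ρ` of `A′ ∩ C` onto `B′ ∩ D` with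
    -- `θ^{f(φ)} = ρ ∘ θ^φ ∘ ρ⁻¹`
    ∃ ρ : C → D,
      Set.BijOn ρ {c : C | ∀ a : A, M.ιA a * c = c * M.ιA a}
        {d : D | ∀ b : B, M.ιB b * d = d * M.ιB b} ∧
      (∀ c ∈ {c : C | ∀ a : A, M.ιA a * c = c * M.ιA a},
        ∀ c' ∈ {c : C | ∀ a : A, M.ιA a * c = c * M.ιA a},
          ρ (c * c') = ρ c * ρ c' ∧ ρ (c + c') = ρ c + ρ c') ∧
      (∀ c ∈ {c : C | ∀ a : A, M.ιA a * c = c * M.ιA a}, ρ (star c) = star (ρ c)) ∧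
      ∀ (θφ : C → C) (θψ : D → D),
        ((∀ c ∈ {c : C | ∀ a : A, M.ιA a * c = c * M.ιA a},
            θφ c ∈ {c : C | ∀ a : A, M.ιA a * c = c * M.ιA a}) ∧
          ∀ c ∈ {c : C | ∀ a : A, M.ιA a * c = c * M.ιA a},
            ∀ y : C, φ (c * y) = φ (y * θφ c)) →
        ((∀ d ∈ {d : D | ∀ b : B, M.ιB b * d = d * M.ιB b},
            θψ d ∈ {d : D | ∀ b : B, M.ιB b * d = d * M.ιB b}) ∧
          ∀ d ∈ {d : D | ∀ b : B, M.ιB b * d = d * M.ιB b},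
            ∀ y : D, ψ (d * y) = ψ (y * θψ d)) →
        ∀ c ∈ {c : C | ∀ a : A, M.ιA a * c = c * M.ιA a}, θψ (ρ c) = ρ (θφ c) := by
  obtain ⟨nB, xBf, zBf, hBf⟩ := M.exists_B_family
  obtain ⟨nAf, pAf, qAf, hAf⟩ := M.exists_A_family
  set e : Fin nB × (Fin m × Fin nAf) ≃ Fin (nB * (m * nAf)) :=
    (Equiv.prodCongr (Equiv.refl (Fin nB)) finProdFinEquiv).trans finProdFinEquiv with he
  constructor
  · refine ⟨nB * (m * nAf),
      fun α => M.innD (M.incl (xBf (e.symm α).1))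
        (M.lC (u (e.symm α).2.1) (M.incl (pAf (e.symm α).2.2))),
      fun α => M.innD (M.incl (qAf (e.symm α).2.2))
        (M.lC (v (e.symm α).2.1) (M.incl (zBf (e.symm α).1))),
      fun d => ⟨?_, ?_⟩⟩
    · symm
      calc ∑ α, M.innD (M.incl (xBf (e.symm α).1))
              (M.lC (u (e.symm α).2.1) (M.incl (pAf (e.symm α).2.2))) *
            M.ιB (ψ (M.innD (M.incl (qAf (e.symm α).2.2))
              (M.lC (v (e.symm α).2.1) (M.incl (zBf (e.symm α).1))) * d))
          = ∑ t : Fin nB × (Fin m × Fin nAf),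
              M.innD (M.incl (xBf t.1)) (M.lC (u t.2.1) (M.incl (pAf t.2.2))) *
                M.ιB (ψ (M.innD (M.incl (qAf t.2.2))
                  (M.lC (v t.2.1) (M.incl (zBf t.1))) * d)) :=
            Equiv.sum_comp e.symm (fun t : Fin nB × Fin m × Fin nAf =>
              M.innD (M.incl (xBf t.1)) (M.lC (u t.2.1) (M.incl (pAf t.2.2))) *
                M.ιB (ψ (M.innD (M.incl (qAf t.2.2))
                  (M.lC (v t.2.1) (M.incl (zBf t.1))) * d)))
        _ = ∑ i0 : Fin nB, ∑ j : Fin m, ∑ l : Fin nAf,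
              M.innD (M.incl (xBf i0)) (M.lC (u j) (M.incl (pAf l))) *
                M.ιB (ψ (M.innD (M.incl (qAf l)) (M.lC (v j) (M.incl (zBf i0))) * d)) := by
            simp only [Fintype.sum_prod_type]
        _ = d := M.qb1 φ ψ hBf hAf hφ hqb hψ d
    · symm
      calc ∑ α, M.ιB (ψ (d * M.innD (M.incl (xBf (e.symm α).1))
              (M.lC (u (e.symm α).2.1) (M.incl (pAf (e.symm α).2.2))))) *
            M.innD (M.incl (qAf (e.symm α).2.2))
              (M.lC (v (e.symm α).2.1) (M.incl (zBf (e.symm α).1)))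
          = ∑ t : Fin nB × (Fin m × Fin nAf),
              M.ιB (ψ (d * M.innD (M.incl (xBf t.1)) (M.lC (u t.2.1) (M.incl (pAf t.2.2))))) *
                M.innD (M.incl (qAf t.2.2)) (M.lC (v t.2.1) (M.incl (zBf t.1))) :=
            Equiv.sum_comp e.symm (fun t : Fin nB × Fin m × Fin nAf =>
              M.ιB (ψ (d * M.innD (M.incl (xBf t.1)) (M.lC (u t.2.1) (M.incl (pAf t.2.2))))) *
                M.innD (M.incl (qAf t.2.2)) (M.lC (v t.2.1) (M.incl (zBf t.1))))
        _ = ∑ i0 : Fin nB, ∑ j : Fin m, ∑ l : Fin nAf,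
              M.ιB (ψ (d * M.innD (M.incl (xBf i0)) (M.lC (u j) (M.incl (pAf l))))) *
                M.innD (M.incl (qAf l)) (M.lC (v j) (M.incl (zBf i0))) := by
            simp only [Fintype.sum_prod_type]
        _ = d := M.qb2 φ ψ hBf hAf hφ hqb hψ d
  · refine ⟨M.rho xBf zBf, ⟨fun c hc => ?_, fun c hc c' hc' h => ?_, fun d hd => ?_⟩,
      fun c hc c' hc' => ⟨M.rho_mul hBf hc hc', M.rho_add c c'⟩,
      fun c hc => M.rho_star hBf hc, ?_⟩
    · exact fun b => M.rho_comm hBf hc b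
    · exact M.rho_inj hBf hAf hc hc' h
    · exact ⟨M.sig pAf qAf d, M.sig_comm hAf hd, M.rho_sig hBf hAf hd⟩
    · intro θφ θψ hθφ hθψ c hc
      have h1 : ∀ y : D, ψ (M.rho xBf zBf c * y) = ψ (y * M.rho xBf zBf (θφ c)) :=
        M.conj_key φ ψ hBf hψ hc (hθφ.1 c hc) (hθφ.2 c hc)
      have h2 : ∀ y : D, ψ (M.rho xBf zBf c * y) = ψ (y * θψ (M.rho xBf zBf c)) :=
        hθψ.2 _ (fun b => M.rho_comm hBf hc b)
      have h3 : ∀ y : D, ψ (y * θψ (M.rho xBf zBf c)) = ψ (y * M.rho xBf zBf (θφ c)) :=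
        fun y => by rw [← h2 y, h1 y]
      have e1 := M.qb1 φ ψ hBf hAf hφ hqb hψ (θψ (M.rho xBf zBf c))
      have e2 := M.qb1 φ ψ hBf hAf hφ hqb hψ (M.rho xBf zBf (θφ c))
      rw [← e1, ← e2]
      exact Finset.sum_congr rfl fun i0 _ => Finset.sum_congr rfl fun j _ =>
        Finset.sum_congr rfl fun l _ => by rw [h3]
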